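/- Let R be a unital ring strongly graded by a group G, and H a subgroup of G. Then C_R(R_H) = C_R(R_e)^H, the set of elements of the commutant of R_e fixed by σ_s for all s in H. -/

import Mathlib

open Pointwise DirectSum

theorem one_mem_graded_one' {G : Type*} [Group G] [DecidableEq G] {R : Type*} [Ring R]
    (𝒜 : G → AddSubgroup R) (hinternal : DirectSum.IsInternal 𝒜)
    (hstrong : ∀ s t : G, 𝒜 s * 𝒜 t = 𝒜 (s * t)) : (1 : R) ∈ 𝒜 1 := by
  classical
  obtain ⟨c, hc⟩ := hinternal.surjective 1
  set e : (⨁ s, 𝒜 s) ≃+ R := AddEquiv.ofBijective _ hinternal with he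
  have heof : ∀ (t : G) (y : 𝒜 t), e (DirectSum.of (fun s => 𝒜 s) t y) = (y : R) := by
    intro t y
    simp [he, AddEquiv.ofBijective, DirectSum.coeAddMonoidHom_of]
    exact DirectSum.coeAddMonoidHom_of _ _ _
  have hsymm : ∀ (t : G) (x : R) (hx : x ∈ 𝒜 t),
      e.symm x = DirectSum.of (fun s => 𝒜 s) t ⟨x, hx⟩ := by
    intro t x hx
    apply e.injective
    rw [e.apply_symm_apply, heof]
  have h1 : (1 : R) = ∑ s ∈ DFinsupp.support c, ((c s : R)) := by
    conv_lhs => rw [← hc]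
    conv_lhs => rw [← DirectSum.sum_support_of c]
    rw [map_sum]
    exact Finset.sum_congr rfl fun s _ => DirectSum.coeAddMonoidHom_of _ _ _
  have key : ∀ (t : G) (x : R), x ∈ 𝒜 t → x * (c 1 : R) = x := by
    intro t x hx
    have hmem : ∀ s, x * (c s : R) ∈ 𝒜 (t * s) := fun s =>
      (hstrong t s) ▸ AddSubmonoid.mul_mem_mul hx (c s).2
    have hx1 : x = ∑ s ∈ DFinsupp.support c, x * (c s : R) := by
      rw [← Finset.mul_sum, ← h1, mul_one]
    have h2 : DirectSum.of (fun s => 𝒜 s) t ⟨x, hx⟩ =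
        ∑ s ∈ DFinsupp.support c,
          DirectSum.of (fun s => 𝒜 s) (t * s) ⟨x * (c s : R), hmem s⟩ := by
      rw [← hsymm t x hx]
      conv_lhs => rw [hx1]
      rw [map_sum]
      exact Finset.sum_congr rfl fun s _ => hsymm (t * s) _ (hmem s)
    let proj : (⨁ s, 𝒜 s) →+ R :=
      { toFun := fun d => ((d t : 𝒜 t) : R)
        map_zero' := by simp
        map_add' := by intro a b; simp [DirectSum.add_apply] }
    have h3 := congrArg proj h2
    rw [map_sum] at h3
    have hL : proj (DirectSum.of (fun s => 𝒜 s) t ⟨x, hx⟩) = x := by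
      show ((DirectSum.of (fun s => 𝒜 s) t ⟨x, hx⟩ t : 𝒜 t) : R) = x
      rw [DirectSum.of_eq_same]
    have hT : ∀ s ∈ DFinsupp.support c,
        proj (DirectSum.of (fun s => 𝒜 s) (t * s) ⟨x * (c s : R), hmem s⟩)
          = if s = 1 then x * (c 1 : R) else 0 := by
      intro s _
      show ((DirectSum.of (fun s => 𝒜 s) (t * s) ⟨x * (c s : R), hmem s⟩ t : 𝒜 t) : R) = _
      rw [DirectSum.coe_of_apply]
      by_cases hs : s = 1
      · subst hs; simp
      · rw [if_neg (fun h => hs (mul_left_cancel (h.trans (mul_one t).symm))), if_neg hs]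
        exact ZeroMemClass.coe_zero _
    rw [hL, Finset.sum_congr rfl hT,
      Finset.sum_ite_eq' _ (1 : G) (fun _ => x * (c 1 : R))] at h3
    by_cases h5 : (1 : G) ∈ DFinsupp.support c
    · rw [if_pos h5] at h3; exact h3.symm
    · rw [if_neg h5] at h3
      have hc0 : (c 1 : R) = 0 := by
        have h6 : c 1 = 0 := DFinsupp.notMem_support_iff.mp h5
        rw [h6]; exact ZeroMemClass.coe_zero _
      rw [hc0, mul_zero, h3]
  have hall : ∀ x : R, x * (c 1 : R) = x := by
    intro x
    obtain ⟨d, rfl⟩ := hinternal.surjective x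
    induction d using DirectSum.induction_on with
    | zero => simp
    | of i y => rw [DirectSum.coeAddMonoidHom_of]; exact key i y y.2
    | add a b ha hb => rw [map_add, add_mul, ha, hb]
  have hone : (c 1 : R) = 1 := by have := hall 1; rwa [one_mul] at this
  exact hone ▸ (c 1).2

/-- **Miyashita.** Let `R` be a unital ring strongly graded by the group `G`
and `H` a subgroup of `G`. Then `C_R(R_H) = C_R(R_e)^H`, the fixed subring of the commutant
of the identity component under the canonical action `σ`. -/
theorem miyashita_commutant {G : Type*} [Group G] {R : Type*} [Ring R]
    (𝒜 : G → AddSubgroup R)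
    -- `R = ⊕_{s ∈ G} R_s`
    (hinternal :
      letI := Classical.decEq G
      DirectSum.IsInternal 𝒜)
    -- strongly graded
    (hstrong : ∀ s t : G, 𝒜 s * 𝒜 t = 𝒜 (s * t))
    -- the canonical action of `G` on `C_R(R_e)`
    (σ : G → R → R)
    (hσmap : ∀ (s : G), ∀ x ∈ {r : R | ∀ a ∈ 𝒜 1, a * r = r * a},
      σ s x ∈ {r : R | ∀ a ∈ 𝒜 1, a * r = r * a})
    (hσ : ∀ (s : G), ∀ x ∈ {r : R | ∀ a ∈ 𝒜 1, a * r = r * a},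
      ∀ r ∈ 𝒜 s, σ s x * r = r * x)
    (H : Subgroup G) :
    {y : R | ∀ r ∈ ⨆ s ∈ H, 𝒜 s, r * y = y * r} =
      {y : R | (∀ a ∈ 𝒜 1, a * y = y * a) ∧ ∀ s ∈ H, σ s y = y} := by
  letI := Classical.decEq G
  have hone : (1 : R) ∈ 𝒜 1 := one_mem_graded_one' 𝒜 hinternal hstrong
  ext y
  simp only [Set.mem_setOf_eq]
  constructor
  · intro hy
    have hle : ∀ s ∈ H, 𝒜 s ≤ ⨆ s ∈ H, 𝒜 s := fun s hs =>
      le_iSup₂ (f := fun (s : G) (_ : s ∈ H) => 𝒜 s) s hs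
    have hcent : ∀ a ∈ 𝒜 1, a * y = y * a := fun a ha => hy a (hle 1 H.one_mem ha)
    refine ⟨hcent, fun s hs => ?_⟩
    have hz : ∀ r ∈ 𝒜 s, (σ s y - y) * r = 0 := by
      intro r hr
      rw [sub_mul, hσ s y hcent r hr, ← hy r (hle s hs hr), sub_self]
    have h1m : (1 : R) ∈ (𝒜 s).toAddSubmonoid * (𝒜 s⁻¹).toAddSubmonoid := by
      have : (1 : R) ∈ 𝒜 s * 𝒜 s⁻¹ := by
        rw [hstrong s s⁻¹, mul_inv_cancel]; exact hone
      exact this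
    have hz1 : (σ s y - y) * 1 = 0 := by
      refine AddSubmonoid.mul_induction_on h1m (fun m hm n hn => ?_)
        (fun a b ha hb => by rw [mul_add, ha, hb, add_zero])
      rw [← mul_assoc, hz m hm, zero_mul]
    rw [mul_one] at hz1
    exact sub_eq_zero.mp hz1
  · rintro ⟨hcent, hfix⟩ r hr
    let T : AddSubgroup R :=
      { carrier := {r : R | r * y = y * r}
        zero_mem' := by simp
        add_mem' := fun {a b} ha hb => by
          simp only [Set.mem_setOf_eq] at *
          rw [add_mul, mul_add, ha, hb]
        neg_mem' := fun {a} ha => by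
          simp only [Set.mem_setOf_eq] at *
          rw [neg_mul, mul_neg, ha] }
    have hT : (⨆ s ∈ H, 𝒜 s) ≤ T := by
      refine iSup₂_le fun s hs a ha => ?_
      show a * y = y * a
      have h := hσ s y hcent a ha
      rw [hfix s hs] at h
      exact h.symm
    exact hT hr
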